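/- (Hajós's lemma) Let K be a field of characteristic 0 and g ∈ K[x] with deg g ≥ 1. If g has a zero β ≠ 0 (in an algebraic closure of K) of multiplicity m, then g has at least m + 1 nonzero terms. -/

import Mathlib

open Polynomial

lemma card_support_X_pow_mul {L : Type*} [Field L] (k : ℕ) (r : L[X]) :
    (X ^ k * r).support.card = r.support.card := by
  have h : (X ^ k * r).support = r.support.image (· + k) := by
    ext n
    simp only [mem_support_iff, Finset.mem_image, coeff_X_pow_mul']
    constructor
    · intro h
      split_ifs at h with hk
      · exact ⟨n - k, h, by omega⟩
      · exact absurd rfl h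
    · rintro ⟨d, hd, rfl⟩
      rw [if_pos (by omega)]
      simpa using hd
  rw [h, Finset.card_image_of_injective _ (add_left_injective k)]

lemma card_support_derivative_succ {L : Type*} [Field L] (r : L[X])
    (h0 : r.coeff 0 ≠ 0) :
    (derivative r).support.card + 1 ≤ r.support.card := by
  have hsub : (derivative r).support.card ≤ (r.support.erase 0).card := by
    apply Finset.card_le_card_of_injOn (fun n => n + 1)
    · intro n hn
      rw [Finset.mem_coe, mem_support_iff, coeff_derivative] at hn
      have : r.coeff (n + 1) ≠ 0 := fun h => hn (by simp [h])
      simp [Finset.mem_erase, mem_support_iff, this]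
    · intro a _ b _ hab
      simpa using hab
  have h0mem : (0 : ℕ) ∈ r.support := mem_support_iff.mpr h0
  have hpos : 1 ≤ r.support.card := Finset.card_pos.mpr ⟨0, h0mem⟩
  rw [Finset.card_erase_of_mem h0mem] at hsub
  omega

lemma hajos_aux {L : Type*} [Field L] [CharZero L] (β : L) (hβ : β ≠ 0) :
    ∀ m : ℕ, ∀ p : L[X], p ≠ 0 → m ≤ p.rootMultiplicity β →
      m + 1 ≤ p.support.card := by
  intro m
  induction m with
  | zero =>
    intro p hp _
    exact Finset.card_pos.mpr (support_nonempty.mpr hp)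
  | succ m ih =>
    intro p hp hmult
    set k := p.natTrailingDegree with hk
    obtain ⟨r, hr⟩ : X ^ k ∣ p :=
      X_pow_dvd_iff.mpr fun d hd => coeff_eq_zero_of_lt_natTrailingDegree hd
    have hr0 : r ≠ 0 := by
      rintro rfl
      simp only [mul_zero] at hr
      exact hp hr
    have hc0 : r.coeff 0 ≠ 0 := by
      have : p.coeff k = r.coeff 0 := by
        have := coeff_X_pow_mul r k 0
        rw [← hr] at this
        simpa using this
      rw [← this]
      exact fun h => hp (trailingCoeff_eq_zero.mp h)
    have hXk : rootMultiplicity β (X ^ k : L[X]) = 0 := by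
      apply rootMultiplicity_eq_zero
      simp only [IsRoot, eval_pow, eval_X]
      exact pow_ne_zero k hβ
    have hmr : rootMultiplicity β r = rootMultiplicity β p := by
      rw [hr, rootMultiplicity_mul (hr ▸ hp), hXk, zero_add]
    have hmult' : m + 1 ≤ rootMultiplicity β r := hmr ▸ hmult
    have hder : derivative r ≠ 0 := by
      intro hd
      have hnd : r.natDegree = 0 := natDegree_eq_zero_of_derivative_eq_zero hd
      have : r = C (r.coeff 0) := eq_C_of_natDegree_eq_zero hnd
      have hroot : r.IsRoot β :=
        (rootMultiplicity_pos hr0).mp (by omega)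
      rw [this] at hroot
      simp only [IsRoot, eval_C] at hroot
      exact hc0 hroot
    have hmd : m ≤ rootMultiplicity β (derivative r) := by
      have := rootMultiplicity_sub_one_le_derivative_rootMultiplicity r β
      omega
    have hih := ih (derivative r) hder hmd
    have hcard := card_support_derivative_succ r hc0
    have hps : p.support.card = r.support.card := by
      rw [hr, card_support_X_pow_mul]
    omega

/-- Hajós's lemma. -/
theorem hajos_lemma {K : Type*} [Field K] [CharZero K] (g : K[X])
    (hg : 1 ≤ g.natDegree) (β : AlgebraicClosure K) (hβ : β ≠ 0) (m : ℕ)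
    (hm : (g.map (algebraMap K (AlgebraicClosure K))).rootMultiplicity β = m) :
    m + 1 ≤ g.support.card := by
  have hg0 : g ≠ 0 := fun h => by simp [h] at hg
  set φ := algebraMap K (AlgebraicClosure K)
  have hφ : Function.Injective φ := (algebraMap K (AlgebraicClosure K)).injective
  have hp0 : g.map φ ≠ 0 := (Polynomial.map_ne_zero_iff hφ).mpr hg0
  have key := hajos_aux β hβ m (g.map φ) hp0 (le_of_eq hm.symm)
  rwa [support_map_of_injective g hφ] at key
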